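/- arXiv:0705.0192 — 2 statements merged into one kernel-verified Lean document; each statement's English description precedes it below -/
import Mathlib

section
/- The Hardy-type operator T : L_p(I) → L_q(I), (Tf)(x) = v(x)∫_a^x f(t)u(t)dt, is a compact operator. -/
open MeasureTheory Set Filter
open scoped ENNReal NNReal

/-- The Hardy-type operator `(Tf)(x) = v(x) ∫_a^x f(t) u(t) dt`. -/
noncomputable def hardyT (u v : ℝ → ℝ) (a : ℝ) (f : ℝ → ℝ) : ℝ → ℝ :=
  fun x => v x * ∫ t in a..x, f t * u t

/-- The adjoint-type operator `(T*f)(x) = u(x) ∫_x^b v(y) f(y) dy`. -/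
noncomputable def hardyTstar (u v : ℝ → ℝ) (b : ℝ) (f : ℝ → ℝ) : ℝ → ℝ :=
  fun x => u x * ∫ t in x..b, v t * f t

/-- `t_{(p)} = |t|^{p-1} sgn t`. -/
noncomputable def powSgn (p t : ℝ) : ℝ := |t| ^ (p - 1) * Real.sign t

/-- The `L_p` norm of a function on `[a,b]`. -/
noncomputable def funLpNorm (p a b : ℝ) (f : ℝ → ℝ) : ℝ :=
  (∫ t in a..b, |f t| ^ p) ^ (1 / p)

/-- A spectral triple `(g, f, λ)` : `g = Tf`, `f_{(p)} = λ T*(g_{(q)})` and `‖f‖_p = 1`. -/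
def IsSpectralTriple (u v : ℝ → ℝ) (a b p q : ℝ) (g f : ℝ → ℝ) (lam : ℝ) : Prop :=
  (∀ x ∈ Set.Icc a b, g x = hardyT u v a f x) ∧
  (∀ x ∈ Set.Icc a b, powSgn p (f x) = lam * hardyTstar u v b (fun y => powSgn q (g y)) x) ∧
  funLpNorm p a b f = 1

/-- `Z(g)`: the number of distinct zeros of `g` in the open interval `(a,b)`. -/
noncomputable def numZeros (a b : ℝ) (g : ℝ → ℝ) : ℕ∞ :=
  {x ∈ Set.Ioo a b | g x = 0}.encard

/-- `P(f)`: the number of sign changes of `f` in the open interval `(a,b)`. -/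
noncomputable def numSignChanges (a b : ℝ) (f : ℝ → ℝ) : ℕ∞ :=
  ⨆ n ∈ {n : ℕ | ∃ x : Fin (n + 1) → ℝ, StrictMono x ∧ (∀ i, x i ∈ Set.Ioo a b) ∧
      ∀ i : Fin n, f (x i.castSucc) * f (x i.succ) < 0}, (n : ℕ∞)

/-- The set `sp_n(T,p,q)` of spectral numbers whose spectral function has `n` zeros. -/
def spSet (u v : ℝ → ℝ) (a b p q : ℝ) (n : ℕ) : Set ℝ :=
  {lam | ∃ g f, IsSpectralTriple u v a b p q g f lam ∧ numZeros a b g = (n : ℕ∞)}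

/-- The Kolmogorov width `d_n(T)`. -/
noncomputable def kolmogorovWidth (u v : ℝ → ℝ) (a b p q : ℝ) (n : ℕ) : ℝ :=
  ⨅ φ : Fin n → (ℝ → ℝ), ⨆ f ∈ {f : ℝ → ℝ | funLpNorm p a b f ≤ 1},
    ⨅ c : Fin n → ℝ, funLpNorm q a b (fun x => hardyT u v a f x - ∑ i, c i * φ i x)

/-- The Bernstein width `b_n(T)`. -/
noncomputable def bernsteinWidth (u v : ℝ → ℝ) (a b p q : ℝ) (n : ℕ) : ℝ :=
  ⨆ φ ∈ {φ : Fin (n + 1) → (ℝ → ℝ) |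
      LinearIndependent ℝ (fun i => hardyT u v a (φ i))},
    ⨅ c ∈ {c : Fin (n + 1) → ℝ | c ≠ 0},
      funLpNorm q a b (hardyT u v a (fun x => ∑ i, c i * φ i x)) /
        funLpNorm p a b (fun x => ∑ i, c i * φ i x)

/-- The approximation number `a_n(T)`: distance to linear maps of rank at most `n-1`. -/
noncomputable def approxNumber (u v : ℝ → ℝ) (a b p q : ℝ) (n : ℕ) : ℝ :=
  ⨅ F ∈ {F : (ℝ → ℝ) →ₗ[ℝ] (ℝ → ℝ) |
      Module.rank ℝ (LinearMap.range F) ≤ ((n - 1 : ℕ) : Cardinal)},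
    ⨆ f ∈ {f : ℝ → ℝ | funLpNorm p a b f ≤ 1},
      funLpNorm q a b (fun x => hardyT u v a f x - F f x)

/-- The constant `c_{pq}`, with the Beta function expressed via the Gamma function. -/
noncomputable def cpq (p p' q : ℝ) : ℝ :=
  (p' ^ (1 / q) * q ^ (1 / p') * (p' + q) ^ (1 / p - 1 / q)) /
    (2 * (Real.Gamma (1 / q) * Real.Gamma (1 / p') / Real.Gamma (1 / q + 1 / p')))


section Generic
variable {α : Type*} [MeasurableSpace α] {μ : Measure α} {P P' : ℝ≥0∞}

lemma hh_integrable_pair {w g : α → ℝ} (h11 : (1:ℝ≥0∞) / 1 = 1 / P' + 1 / P)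
    (hw : MemLp w P' μ) (hg : MemLp g P μ) :
    Integrable (fun x => w x * g x) μ := by
  have := (by haveI : ENNReal.HolderTriple P' P 1 := ⟨by simpa [one_div] using h11.symm⟩; exact hg.smul hw : MemLp (w • g) 1 μ)
  rw [memLp_one_iff_integrable] at this
  simpa [Pi.smul_apply, smul_eq_mul, Pi.mul_def] using this

lemma hh_norm_integral_le {w g : α → ℝ} (h11 : (1:ℝ≥0∞) / 1 = 1 / P' + 1 / P)
    (hw : MemLp w P' μ) (hg : MemLp g P μ) :
    ∫ x, ‖w x * g x‖ ∂μ ≤ (eLpNorm w P' μ).toReal * (eLpNorm g P μ).toReal := by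
  have hint : Integrable (fun x => w x * g x) μ := hh_integrable_pair h11 hw hg
  have h1 : ∫ x, ‖w x * g x‖ ∂μ = (eLpNorm (w • g) 1 μ).toReal := by
    rw [eLpNorm_one_eq_lintegral_enorm,
      ← integral_norm_eq_lintegral_enorm (by simpa [Pi.smul_apply, smul_eq_mul, Pi.mul_def] using hint.1)]
    simp [Pi.smul_apply, smul_eq_mul]
  rw [h1, ← ENNReal.toReal_mul]
  refine ENNReal.toReal_mono (ENNReal.mul_ne_top hw.eLpNorm_ne_top hg.eLpNorm_ne_top) ?_
  haveI : ENNReal.HolderTriple P' P 1 := ⟨by simpa [one_div] using h11.symm⟩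
  exact eLpNorm_smul_le_mul_eLpNorm hg.1 hw.1

/-- Integration against a fixed `L^{p'}` function, as a continuous linear functional on `Lp`. -/
noncomputable def hhPairing (μ : Measure α) (P P' : ℝ≥0∞) [Fact (1 ≤ P)]
    (h11 : (1:ℝ≥0∞) / 1 = 1 / P' + 1 / P) (w : α → ℝ) (hw : MemLp w P' μ) :
    Lp ℝ P μ →L[ℝ] ℝ :=
  LinearMap.mkContinuous
    { toFun := fun f => ∫ x, w x * (f : α → ℝ) x ∂μ
      map_add' := by
        intro f g
        have h := Lp.coeFn_add f g
        rw [← integral_add (hh_integrable_pair h11 hw (Lp.memLp f))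
            (hh_integrable_pair h11 hw (Lp.memLp g))]
        refine integral_congr_ae ?_
        filter_upwards [h] with x hx
        rw [hx, Pi.add_apply]; ring
      map_smul' := by
        intro c f
        have h := Lp.coeFn_smul c f
        rw [RingHom.id_apply, ← integral_smul]
        refine integral_congr_ae ?_
        filter_upwards [h] with x hx
        simp [hx, mul_comm, mul_left_comm] }
    ((eLpNorm w P' μ).toReal)
    (by
      intro f
      simp only [LinearMap.coe_mk, AddHom.coe_mk]
      calc ‖∫ x, w x * (f : α → ℝ) x ∂μ‖ ≤ ∫ x, ‖w x * (f : α → ℝ) x‖ ∂μ :=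
            norm_integral_le_integral_norm _
        _ ≤ (eLpNorm w P' μ).toReal * (eLpNorm (f : α → ℝ) P μ).toReal :=
            hh_norm_integral_le h11 hw (Lp.memLp f)
        _ = (eLpNorm w P' μ).toReal * ‖f‖ := by rw [Lp.norm_def])

@[simp] lemma hhPairing_apply {μ : Measure α} {P P' : ℝ≥0∞} [Fact (1 ≤ P)]
    (h11 : (1:ℝ≥0∞) / 1 = 1 / P' + 1 / P) (w : α → ℝ) (hw : MemLp w P' μ) (f : Lp ℝ P μ) :
    hhPairing μ P P' h11 w hw f = ∫ x, w x * (f : α → ℝ) x ∂μ := rfl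

/-- A rank-one operator is compact. -/
lemma hh_isCompactOperator_smulRight {E F : Type*} [NormedAddCommGroup E] [NormedSpace ℝ E]
    [NormedAddCommGroup F] [NormedSpace ℝ F] (c : E →L[ℝ] ℝ) (y : F) :
    IsCompactOperator (c.smulRight y) := by
  refine ⟨(fun r : ℝ => r • y) '' Set.Icc (-‖c‖) ‖c‖,
    (isCompact_Icc.image (by continuity)), ?_⟩
  refine Filter.mem_of_superset (Metric.ball_mem_nhds 0 one_pos) ?_
  intro f hf
  have hfn : ‖f‖ < 1 := by simpa using hf
  have : |c f| ≤ ‖c‖ := by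
    calc |c f| = ‖c f‖ := rfl
      _ ≤ ‖c‖ * ‖f‖ := c.le_opNorm f
      _ ≤ ‖c‖ * 1 := by
          exact mul_le_mul_of_nonneg_left hfn.le (norm_nonneg _)
      _ = ‖c‖ := mul_one _
  exact ⟨c f, abs_le.mp this |> fun h => ⟨h.1, h.2⟩, rfl⟩

/-- coercion of a finite sum of Lp elements. -/
lemma hh_coeFn_sum {E : Type*} [NormedAddCommGroup E] {P : ℝ≥0∞} {ι : Type*} (s : Finset ι)
    (F : ι → Lp E P μ) :
    (((∑ i ∈ s, F i : Lp E P μ) : α →ₘ[μ] E) : α → E) =ᵐ[μ] fun x => ∑ i ∈ s, (F i : α → E) x := by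
  classical
  induction s using Finset.induction_on with
  | empty => simpa [Pi.zero_def] using Lp.coeFn_zero E P μ
  | insert _ _ hnot ih =>
    rename_i a s
    rw [Finset.sum_insert hnot]
    filter_upwards [Lp.coeFn_add (F a) (∑ i ∈ s, F i), ih] with x hx hx2
    rw [Finset.sum_insert hnot, hx, Pi.add_apply, hx2]

end Generic


section Hardy
variable {a b p q p' : ℝ} {u v : ℝ → ℝ}

/-- The truncated integrand. -/
noncomputable def hhG (a b : ℝ) (u g : ℝ → ℝ) : ℝ → ℝ := (Icc a b).indicator (fun t => g t * u t)

/-- The Hardy operator as a plain function. -/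
noncomputable def hhT (a b : ℝ) (u v g : ℝ → ℝ) : ℝ → ℝ :=
  fun x => v x * ∫ t in a..x, hhG a b u g t

lemma hh_conj (hp : 1 < p) (hp' : 1 / p' = 1 - 1 / p) : Real.HolderConjugate p p' := by
  refine Real.holderConjugate_iff.2 ⟨hp, ?_⟩
  have := hp'.symm
  rw [one_div, one_div] at this
  rw [← this]; ring

lemma hh_h11 (hp : 1 < p) (hp' : 1 / p' = 1 - 1 / p) :
    (1:ℝ≥0∞) / 1 = 1 / (ENNReal.ofReal p') + 1 / (ENNReal.ofReal p) := by
  have hc := hh_conj hp hp'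
  have hppos : 0 < p := hc.pos
  have hp'pos : 0 < p' := hc.symm.pos
  rw [one_div, one_div, one_div, ← ENNReal.ofReal_inv_of_pos hp'pos,
    ← ENNReal.ofReal_inv_of_pos hppos, inv_one, ← ENNReal.ofReal_add (by positivity) (by positivity),
    ← ENNReal.ofReal_one]
  congr 1
  have := hc.inv_add_inv_eq_one
  linarith

variable (hp : 1 < p) (hp' : 1 / p' = 1 - 1 / p)
  (hu' : MemLp u (ENNReal.ofReal p') (volume.restrict (Set.Icc a b)))
  (hv' : MemLp v (ENNReal.ofReal q) (volume.restrict (Set.Icc a b)))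

include hp hp' hu'

lemma hhG_integrable {g : ℝ → ℝ} (hg : MemLp g (ENNReal.ofReal p) (volume.restrict (Set.Icc a b))) :
    Integrable (hhG a b u g) volume := by
  rw [hhG, integrable_indicator_iff measurableSet_Icc]
  have := hh_integrable_pair (hh_h11 hp hp') hu' hg
  exact (this.congr (by filter_upwards with x using mul_comm _ _) : )

omit hp hp' hu' in
lemma hhT_eq_on_Icc {g : ℝ → ℝ} {x : ℝ} (hx : x ∈ Icc a b) :
    hhT a b u v g x = v x * ∫ t in a..x, g t * u t := by
  rw [hhT]
  congr 1
  rw [intervalIntegral.integral_of_le hx.1, intervalIntegral.integral_of_le hx.1, hhG,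
    setIntegral_indicator measurableSet_Icc,
    inter_eq_left.mpr (Ioc_subset_Icc_self.trans (Icc_subset_Icc_right hx.2))]

lemma hh_primitive_bound {g : ℝ → ℝ}
    (hg : MemLp g (ENNReal.ofReal p) (volume.restrict (Set.Icc a b))) (x : ℝ) :
    ‖∫ t in a..x, hhG a b u g t‖ ≤
      (eLpNorm u (ENNReal.ofReal p') (volume.restrict (Set.Icc a b))).toReal *
      (eLpNorm g (ENNReal.ofReal p) (volume.restrict (Set.Icc a b))).toReal := by
  have hGint := hhG_integrable hp hp' hu' hg
  have h1 : ‖∫ t in a..x, hhG a b u g t‖ ≤ ∫ t, ‖hhG a b u g t‖ := by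
    rcases le_total a x with h | h
    · refine (intervalIntegral.norm_integral_le_integral_norm h).trans ?_
      rw [intervalIntegral.integral_of_le h]
      exact setIntegral_le_integral hGint.norm (by filter_upwards with t using norm_nonneg _)
    · rw [intervalIntegral.integral_symm]
      rw [norm_neg]
      refine (intervalIntegral.norm_integral_le_integral_norm h).trans ?_
      rw [intervalIntegral.integral_of_le h]
      exact setIntegral_le_integral hGint.norm (by filter_upwards with t using norm_nonneg _)
  refine h1.trans ?_
  have h2 : ∫ t, ‖hhG a b u g t‖ =
      ∫ t, ‖u t * g t‖ ∂(volume.restrict (Set.Icc a b)) := by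
    rw [hhG]
    simp_rw [norm_indicator_eq_indicator_norm]
    rw [integral_indicator measurableSet_Icc]
    exact integral_congr_ae (by filter_upwards with t using by rw [norm_mul, norm_mul, mul_comm])
  rw [h2]
  exact hh_norm_integral_le (hh_h11 hp hp') hu' hg

include hv' in
lemma hhT_memℒp {g : ℝ → ℝ}
    (hg : MemLp g (ENNReal.ofReal p) (volume.restrict (Set.Icc a b))) :
    MemLp (hhT a b u v g) (ENNReal.ofReal q) (volume.restrict (Set.Icc a b)) := by
  set μ := volume.restrict (Set.Icc a b)
  set K := (eLpNorm u (ENNReal.ofReal p') μ).toReal * (eLpNorm g (ENNReal.ofReal p) μ).toReal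
    with hK
  have hK0 : 0 ≤ K := mul_nonneg ENNReal.toReal_nonneg ENNReal.toReal_nonneg
  have hbd : ∀ x, ‖hhT a b u v g x‖ ≤ ‖(K • v) x‖ := by
    intro x
    rw [hhT, Pi.smul_apply, smul_eq_mul, norm_mul, norm_mul, mul_comm ‖K‖]
    refine mul_le_mul_of_nonneg_left ?_ (norm_nonneg _)
    rw [Real.norm_of_nonneg hK0]
    exact hh_primitive_bound hp hp' hu' hg x
  have hmeas : AEStronglyMeasurable (hhT a b u v g) μ := by
    refine AEStronglyMeasurable.mul hv'.1 ?_
    exact ((hhG_integrable hp hp' hu' hg).continuous_primitive a).aestronglyMeasurable.restrict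
  refine ⟨hmeas, ?_⟩
  calc eLpNorm (hhT a b u v g) (ENNReal.ofReal q) μ
      ≤ eLpNorm (K • v) (ENNReal.ofReal q) μ :=
        eLpNorm_mono_ae (Eventually.of_forall hbd)
    _ = ‖K‖₊ * eLpNorm v (ENNReal.ofReal q) μ := eLpNorm_const_smul _ _ _ _
    _ < ⊤ := ENNReal.mul_lt_top ENNReal.coe_lt_top hv'.eLpNorm_lt_top

include hv' in
lemma hhT_eLpNorm_le {g : ℝ → ℝ}
    (hg : MemLp g (ENNReal.ofReal p) (volume.restrict (Set.Icc a b))) :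
    (eLpNorm (hhT a b u v g) (ENNReal.ofReal q) (volume.restrict (Set.Icc a b))).toReal ≤
      (eLpNorm u (ENNReal.ofReal p') (volume.restrict (Set.Icc a b))).toReal *
      (eLpNorm v (ENNReal.ofReal q) (volume.restrict (Set.Icc a b))).toReal *
      (eLpNorm g (ENNReal.ofReal p) (volume.restrict (Set.Icc a b))).toReal := by
  set μ := volume.restrict (Set.Icc a b)
  set K := (eLpNorm u (ENNReal.ofReal p') μ).toReal * (eLpNorm g (ENNReal.ofReal p) μ).toReal
  have hK0 : 0 ≤ K := mul_nonneg ENNReal.toReal_nonneg ENNReal.toReal_nonneg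
  have hbd : ∀ x, ‖hhT a b u v g x‖ ≤ ‖(K • v) x‖ := by
    intro x
    rw [hhT, Pi.smul_apply, smul_eq_mul, norm_mul, norm_mul, mul_comm ‖K‖]
    refine mul_le_mul_of_nonneg_left ?_ (norm_nonneg _)
    rw [Real.norm_of_nonneg hK0]
    exact hh_primitive_bound hp hp' hu' hg x
  have h1 : eLpNorm (hhT a b u v g) (ENNReal.ofReal q) μ ≤
      ‖K‖₊ * eLpNorm v (ENNReal.ofReal q) μ := by
    calc eLpNorm (hhT a b u v g) (ENNReal.ofReal q) μ
        ≤ eLpNorm (K • v) (ENNReal.ofReal q) μ := eLpNorm_mono_ae (Eventually.of_forall hbd)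
      _ = ‖K‖₊ * eLpNorm v (ENNReal.ofReal q) μ := eLpNorm_const_smul _ _ _ _
  have h2 := ENNReal.toReal_mono
    (ENNReal.mul_ne_top ENNReal.coe_ne_top hv'.eLpNorm_ne_top) h1
  rw [ENNReal.toReal_mul, ENNReal.coe_toReal, coe_nnnorm, Real.norm_of_nonneg hK0] at h2
  calc (eLpNorm (hhT a b u v g) (ENNReal.ofReal q) μ).toReal
      ≤ K * (eLpNorm v (ENNReal.ofReal q) μ).toReal := h2
    _ = _ := by ring

end Hardy

section Hardy2
variable {a b p q p' : ℝ} {u v : ℝ → ℝ}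
variable (hp : 1 < p) (hp' : 1 / p' = 1 - 1 / p)
  (hu' : MemLp u (ENNReal.ofReal p') (volume.restrict (Set.Icc a b)))
  (hv' : MemLp v (ENNReal.ofReal q) (volume.restrict (Set.Icc a b)))

lemma hhT_congr {g₁ g₂ : ℝ → ℝ} (h : g₁ =ᵐ[volume.restrict (Set.Icc a b)] g₂) :
    hhT a b u v g₁ = hhT a b u v g₂ := by
  have h' : hhG a b u g₁ =ᵐ[volume] hhG a b u g₂ := by
    have := (ae_restrict_iff' measurableSet_Icc).mp h
    filter_upwards [this] with t ht
    by_cases hmem : t ∈ Icc a b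
    · simp [hhG, indicator_of_mem hmem, ht hmem]
    · simp [hhG, indicator_of_notMem hmem]
  funext x
  rw [hhT, hhT]
  congr 1
  exact intervalIntegral.integral_congr_ae (ae_imp_of_ae_restrict (ae_restrict_of_ae h'))

include hp hp' hu' in
lemma hhT_add {g₁ g₂ : ℝ → ℝ}
    (hg₁ : MemLp g₁ (ENNReal.ofReal p) (volume.restrict (Set.Icc a b)))
    (hg₂ : MemLp g₂ (ENNReal.ofReal p) (volume.restrict (Set.Icc a b))) :
    hhT a b u v (g₁ + g₂) = hhT a b u v g₁ + hhT a b u v g₂ := by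
  have hGadd : hhG a b u (g₁ + g₂) = hhG a b u g₁ + hhG a b u g₂ := by
    funext t
    by_cases hmem : t ∈ Icc a b
    · simp [hhG, indicator_of_mem hmem]; ring
    · simp [hhG, indicator_of_notMem hmem]
  funext x
  rw [Pi.add_apply, hhT, hhT, hhT, hGadd]
  have := intervalIntegral.integral_add
    ((hhG_integrable hp hp' hu' hg₁).intervalIntegrable (a := a) (b := x))
    ((hhG_integrable hp hp' hu' hg₂).intervalIntegrable (a := a) (b := x))
  simp only [Pi.add_apply]
  rw [this]; ring

lemma hhT_smul (c : ℝ) (g : ℝ → ℝ) :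
    hhT a b u v (c • g) = c • hhT a b u v g := by
  have hGsmul : hhG a b u (c • g) = c • hhG a b u g := by
    funext t
    by_cases hmem : t ∈ Icc a b
    · simp [hhG, indicator_of_mem hmem]; ring
    · simp [hhG, indicator_of_notMem hmem]
  funext x
  rw [Pi.smul_apply, hhT, hhT, hGsmul]
  simp only [Pi.smul_apply, smul_eq_mul]
  rw [intervalIntegral.integral_const_mul]
  ring

/-- The Hardy operator as a continuous linear map on Lp spaces. -/
noncomputable def hardyCLM [Fact (1 ≤ ENNReal.ofReal p)] [Fact (1 ≤ ENNReal.ofReal q)]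
    (hp : 1 < p) (hp' : 1 / p' = 1 - 1 / p)
    (hu' : MemLp u (ENNReal.ofReal p') (volume.restrict (Set.Icc a b)))
    (hv' : MemLp v (ENNReal.ofReal q) (volume.restrict (Set.Icc a b))) :
    Lp ℝ (ENNReal.ofReal p) (volume.restrict (Set.Icc a b)) →L[ℝ]
      Lp ℝ (ENNReal.ofReal q) (volume.restrict (Set.Icc a b)) :=
  LinearMap.mkContinuous
    { toFun := fun f => (hhT_memℒp hp hp' hu' hv' (Lp.memLp f)).toLp (hhT a b u v (f : ℝ → ℝ))
      map_add' := by
        intro f g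
        rw [← MemLp.toLp_add]
        refine MemLp.toLp_congr _ _ ?_
        rw [← hhT_add hp hp' hu' (Lp.memLp f) (Lp.memLp g),
          hhT_congr (Lp.coeFn_add f g)]
      map_smul' := by
        intro c f
        rw [RingHom.id_apply]
        have he : hhT a b u v ((c • f : Lp ℝ (ENNReal.ofReal p) (volume.restrict (Set.Icc a b))) : ℝ → ℝ)
            = c • hhT a b u v (f : ℝ → ℝ) := by
          rw [hhT_congr (Lp.coeFn_smul c f), hhT_smul]
        rw [MemLp.toLp_congr _ ((hhT_memℒp hp hp' hu' hv' (Lp.memLp f)).const_smul c)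
          (Filter.EventuallyEq.of_eq he), MemLp.toLp_const_smul] }
    ((eLpNorm u (ENNReal.ofReal p') (volume.restrict (Set.Icc a b))).toReal *
      (eLpNorm v (ENNReal.ofReal q) (volume.restrict (Set.Icc a b))).toReal)
    (by
      intro f
      simp only [LinearMap.coe_mk, AddHom.coe_mk]
      rw [Lp.norm_toLp, Lp.norm_def]
      exact hhT_eLpNorm_le hp hp' hu' hv' (Lp.memLp f))

lemma hardyCLM_coeFn [Fact (1 ≤ ENNReal.ofReal p)] [Fact (1 ≤ ENNReal.ofReal q)]
    (f : Lp ℝ (ENNReal.ofReal p) (volume.restrict (Set.Icc a b))) :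
    (hardyCLM hp hp' hu' hv' f : ℝ → ℝ) =ᵐ[volume.restrict (Set.Icc a b)]
      hhT a b u v (f : ℝ → ℝ) :=
  MemLp.coeFn_toLp (hhT_memℒp hp hp' hu' hv' (Lp.memLp f))

end Hardy2

section Approx
variable {a b p q p' : ℝ} {u v : ℝ → ℝ}

/-- Grid points. -/
noncomputable def hhGrid (a b : ℝ) (n i : ℕ) : ℝ := a + (b - a) / n * i

/-- Index of the grid interval containing `x`. -/
noncomputable def hhIdx (a b : ℝ) (n : ℕ) (x : ℝ) : ℕ :=
  min (n - 1) ⌊(x - a) * n / (b - a)⌋₊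

lemma hhIdx_lt {n : ℕ} (hn : 1 ≤ n) (x : ℝ) : hhIdx a b n x < n :=
  lt_of_le_of_lt (min_le_left _ _) (Nat.sub_lt hn one_pos)

lemma hhIdx_measurable (a b : ℝ) (n : ℕ) : Measurable (hhIdx a b n) := by
  apply Measurable.min measurable_const
  exact Nat.measurable_floor.comp (by measurability)

lemma hhGrid_mem {n : ℕ} (hab : a < b) (hn : 1 ≤ n) {x : ℝ} (hx : x ∈ Icc a b) :
    a ≤ hhGrid a b n (hhIdx a b n x) ∧ hhGrid a b n (hhIdx a b n x) ≤ x ∧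
      x - hhGrid a b n (hhIdx a b n x) ≤ (b - a) / n := by
  simp only [hhIdx]
  have hbma : (0:ℝ) < b - a := sub_pos.2 hab
  have hn' : (0:ℝ) < n := by exact_mod_cast hn
  set d : ℝ := (b - a) / n with hd
  have hd0 : 0 < d := by positivity
  set r : ℝ := (x - a) * n / (b - a) with hr
  have hr0 : 0 ≤ r := div_nonneg (mul_nonneg (sub_nonneg.2 hx.1) hn'.le) hbma.le
  set m := ⌊r⌋₊ with hm
  set i₀ := min (n - 1) m with hi₀
  have hxa : x - a = r * d := by
    rw [hr, hd]; field_simp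
  have hcast : (i₀:ℝ) ≤ r := le_trans (by exact_mod_cast Nat.cast_le.mpr (min_le_right (n-1) m)) (Nat.floor_le hr0)
  have hgrid : hhGrid a b n i₀ = a + d * i₀ := by rw [hhGrid, hd]
  refine ⟨?_, ?_, ?_⟩
  · rw [hgrid]
    have : 0 ≤ d * (i₀:ℝ) := mul_nonneg hd0.le (Nat.cast_nonneg _)
    linarith
  · rw [hgrid]
    nlinarith [mul_le_mul_of_nonneg_left hcast hd0.le]
  · rcases le_or_gt m (n - 1) with hcase | hcase
    · have hieq : i₀ = m := min_eq_right hcase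
      have hrm : r < m + 1 := Nat.lt_floor_add_one r
      rw [hgrid, hieq]
      nlinarith [mul_le_mul_of_nonneg_right (show r - (m:ℝ) ≤ 1 by linarith) hd0.le]
    · have hieq : i₀ = n - 1 := min_eq_left hcase.le
      have hcast2 : ((n - 1 : ℕ) : ℝ) = (n:ℝ) - 1 := by
        rw [Nat.cast_sub hn, Nat.cast_one]
      have hdn : d * (n:ℝ) = b - a := by rw [hd]; field_simp
      rw [hgrid, hieq, hcast2]
      have hxb : x ≤ b := hx.2
      nlinarith

end Approx

section Approx2
variable {a b p q p' : ℝ} {u v : ℝ → ℝ}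

lemma hh_sum_compact {E F : Type*} [NormedAddCommGroup E] [NormedSpace ℝ E]
    [NormedAddCommGroup F] [NormedSpace ℝ F] {ι : Type*} (s : Finset ι) (T : ι → E →L[ℝ] F)
    (h : ∀ i ∈ s, IsCompactOperator ⇑(T i)) : IsCompactOperator ⇑(∑ i ∈ s, T i) := by
  classical
  induction s using Finset.cons_induction with
  | empty => simpa using (isCompactOperator_zero :
      IsCompactOperator (0 : E → F))
  | cons i s hi ih =>
    rw [Finset.sum_cons]
    have hco : ⇑(T i + ∑ j ∈ s, T j) = ⇑(T i) + ⇑(∑ j ∈ s, T j) := rfl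
    rw [hco]
    exact (h i (Finset.mem_cons_self _ _)).add (ih fun j hj => h j (Finset.mem_cons_of_mem hj))

/-- The finite-rank approximations to the Hardy operator. -/
noncomputable def hhS [Fact (1 ≤ ENNReal.ofReal p)] [Fact (1 ≤ ENNReal.ofReal q)]
    (hp : 1 < p) (hp' : 1 / p' = 1 - 1 / p)
    (hu' : MemLp u (ENNReal.ofReal p') (volume.restrict (Set.Icc a b)))
    (hv' : MemLp v (ENNReal.ofReal q) (volume.restrict (Set.Icc a b))) (n : ℕ) :
    Lp ℝ (ENNReal.ofReal p) (volume.restrict (Set.Icc a b)) →L[ℝ]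
      Lp ℝ (ENNReal.ofReal q) (volume.restrict (Set.Icc a b)) :=
  ∑ i ∈ Finset.range n,
    (hhPairing (volume.restrict (Set.Icc a b)) (ENNReal.ofReal p) (ENNReal.ofReal p')
        (hh_h11 hp hp') ((Set.Ioc a (hhGrid a b n i)).indicator u)
        (hu'.indicator measurableSet_Ioc)).smulRight
      ((hv'.indicator ((hhIdx_measurable a b n) (measurableSet_singleton i))).toLp
        ((hhIdx a b n ⁻¹' {i}).indicator v))

lemma hhS_isCompact [Fact (1 ≤ ENNReal.ofReal p)] [Fact (1 ≤ ENNReal.ofReal q)]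
    (hp : 1 < p) (hp' : 1 / p' = 1 - 1 / p)
    (hu' : MemLp u (ENNReal.ofReal p') (volume.restrict (Set.Icc a b)))
    (hv' : MemLp v (ENNReal.ofReal q) (volume.restrict (Set.Icc a b))) (n : ℕ) :
    IsCompactOperator ⇑(hhS hp hp' hu' hv' n) :=
  hh_sum_compact _ _ (fun _ _ => hh_isCompactOperator_smulRight _ _)

/-- The pairing against `(Ioc a c).indicator u` computes the truncated primitive. -/
lemma hh_pair_eq (hp : 1 < p) (hp' : 1 / p' = 1 - 1 / p)
    (hu' : MemLp u (ENNReal.ofReal p') (volume.restrict (Set.Icc a b)))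
    {c : ℝ} (hc : c ∈ Set.Icc a b) (g : ℝ → ℝ) :
    ∫ y, (Set.Ioc a c).indicator u y * g y ∂(volume.restrict (Set.Icc a b)) =
      ∫ t in a..c, hhG a b u g t := by
  have hsub : Set.Ioc a c ⊆ Set.Icc a b := Ioc_subset_Icc_self.trans (Icc_subset_Icc_right hc.2)
  have h1 : ∫ y, (Set.Ioc a c).indicator u y * g y ∂(volume.restrict (Set.Icc a b)) =
      ∫ y in Set.Ioc a c, u y * g y ∂(volume.restrict (Set.Icc a b)) := by
    rw [← integral_indicator measurableSet_Ioc]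
    exact integral_congr_ae (Eventually.of_forall fun y =>
      (Set.indicator_mul_left _ _ _).symm)
  rw [h1, Measure.restrict_restrict measurableSet_Ioc, inter_eq_left.mpr hsub,
    intervalIntegral.integral_of_le hc.1, hhG, setIntegral_indicator measurableSet_Icc,
    inter_eq_left.mpr hsub]
  exact setIntegral_congr_ae measurableSet_Ioc (Eventually.of_forall fun y _ => mul_comm _ _)

/-- Uniform smallness of the `L^{p'}` norm of `u` over short subintervals. -/
lemma hh_smallnorm (hab : a < b) (hp : 1 < p) (hp' : 1 / p' = 1 - 1 / p)
    (hu' : MemLp u (ENNReal.ofReal p') (volume.restrict (Set.Icc a b))) :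
    ∀ ε > (0:ℝ), ∃ δ > (0:ℝ), ∀ c x : ℝ, a ≤ c → c ≤ x → x ≤ b → x - c < δ →
      (eLpNorm ((Set.Ioc c x).indicator u) (ENNReal.ofReal p')
        (volume.restrict (Set.Icc a b))).toReal ≤ ε := by
  intro ε hε
  have hc := hh_conj hp hp'
  have hp'1 : 1 < p' := Real.HolderTriple.lt hc.symm
  have hp'0 : 0 < p' := lt_trans one_pos hp'1
  have hP'0 : ENNReal.ofReal p' ≠ 0 := by
    simp [ENNReal.ofReal_eq_zero, not_le, hp'0]
  have hP't : (ENNReal.ofReal p').toReal = p' := ENNReal.toReal_ofReal hp'0.le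
  -- the integrable truncated weight
  set W : ℝ → ℝ := (Set.Icc a b).indicator (fun t => ‖u t‖ ^ p') with hW
  have hWint : Integrable W volume := by
    rw [hW, integrable_indicator_iff measurableSet_Icc]
    have := hu'.integrable_norm_rpow hP'0 ENNReal.ofReal_ne_top
    rwa [hP't] at this
  set Φ : ℝ → ℝ := fun y => ∫ t in a..y, W t with hΦ
  have hΦc : Continuous Φ := hWint.continuous_primitive a
  have huc := (isCompact_Icc (a := a) (b := b)).uniformContinuousOn_of_continuous
    hΦc.continuousOn
  rw [Metric.uniformContinuousOn_iff] at huc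
  obtain ⟨δ, hδ0, hδ⟩ := huc (ε ^ p') (Real.rpow_pos_of_pos hε _)
  refine ⟨δ, hδ0, fun c x hac hcx hxb hδ' => ?_⟩
  have hsub : Set.Ioc c x ⊆ Set.Icc a b := fun t ht => ⟨hac.trans ht.1.le, ht.2.trans hxb⟩
  -- the real set integral
  have hIOn : IntegrableOn (fun t => ‖u t‖ ^ p') (Set.Ioc c x) volume := by
    have h1 : IntegrableOn (fun t => ‖u t‖ ^ p') (Set.Icc a b) volume := by
      rw [← integrable_indicator_iff measurableSet_Icc]; exact hWint
    exact h1.mono_set hsub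
  have hR0 : 0 ≤ ∫ t in Set.Ioc c x, ‖u t‖ ^ p' ∂volume :=
    setIntegral_nonneg measurableSet_Ioc fun t _ => Real.rpow_nonneg (norm_nonneg _) _
  have hRΦ : ∫ t in Set.Ioc c x, ‖u t‖ ^ p' ∂volume = Φ x - Φ c := by
    rw [hΦ]
    rw [intervalIntegral.integral_interval_sub_left hWint.intervalIntegrable
      hWint.intervalIntegrable, intervalIntegral.integral_of_le hcx]
    rw [hW]
    rw [setIntegral_indicator measurableSet_Icc, inter_eq_left.mpr hsub]
  have hRle : ∫ t in Set.Ioc c x, ‖u t‖ ^ p' ∂volume ≤ ε ^ p' := by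
    rw [hRΦ]
    have hxm : x ∈ Set.Icc a b := ⟨hac.trans hcx, hxb⟩
    have hcm : c ∈ Set.Icc a b := ⟨hac, hcx.trans hxb⟩
    have hdist := hδ x hxm c hcm (by
      rw [Real.dist_eq, abs_of_nonneg (sub_nonneg.2 hcx)]; exact hδ')
    rw [Real.dist_eq] at hdist
    calc Φ x - Φ c ≤ |Φ x - Φ c| := le_abs_self _
      _ ≤ ε ^ p' := hdist.le
  -- compute the eLpNorm
  have hnorm : eLpNorm ((Set.Ioc c x).indicator u) (ENNReal.ofReal p')
      (volume.restrict (Set.Icc a b)) =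
      ENNReal.ofReal (∫ t in Set.Ioc c x, ‖u t‖ ^ p' ∂volume) ^ (1 / p') := by
    rw [eLpNorm_indicator_eq_eLpNorm_restrict measurableSet_Ioc,
      Measure.restrict_restrict measurableSet_Ioc, inter_eq_left.mpr hsub,
      eLpNorm_eq_lintegral_rpow_enorm_toReal hP'0 ENNReal.ofReal_ne_top, hP't]
    congr 1
    rw [ofReal_integral_eq_lintegral_ofReal hIOn
      (Eventually.of_forall fun t => Real.rpow_nonneg (norm_nonneg _) _)]
    refine lintegral_congr fun t => ?_
    rw [← ofReal_norm, ENNReal.ofReal_rpow_of_nonneg (norm_nonneg _) hp'0.le]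
  rw [hnorm, ← ENNReal.toReal_rpow, ENNReal.toReal_ofReal hR0]
  calc (∫ t in Set.Ioc c x, ‖u t‖ ^ p' ∂volume) ^ (1 / p') ≤ (ε ^ p') ^ (1 / p') :=
        Real.rpow_le_rpow hR0 hRle (by positivity)
    _ = ε := by
        rw [← Real.rpow_mul hε.le, mul_one_div_cancel (ne_of_gt hp'0), Real.rpow_one]

end Approx2

section Approx3
variable {a b p q p' : ℝ} {u v : ℝ → ℝ}

lemma hh_opnorm_bound [Fact (1 ≤ ENNReal.ofReal p)] [Fact (1 ≤ ENNReal.ofReal q)]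
    (hab : a < b) (hp : 1 < p) (hp' : 1 / p' = 1 - 1 / p)
    (hu' : MemLp u (ENNReal.ofReal p') (volume.restrict (Set.Icc a b)))
    (hv' : MemLp v (ENNReal.ofReal q) (volume.restrict (Set.Icc a b)))
    {n : ℕ} (hn : 1 ≤ n) {ε₂ : ℝ} (hε₂ : 0 ≤ ε₂)
    (hE : ∀ c x : ℝ, a ≤ c → c ≤ x → x ≤ b → x - c ≤ (b - a) / n →
      (eLpNorm ((Set.Ioc c x).indicator u) (ENNReal.ofReal p')
        (volume.restrict (Set.Icc a b))).toReal ≤ ε₂)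
    (f : Lp ℝ (ENNReal.ofReal p) (volume.restrict (Set.Icc a b))) :
    ‖hardyCLM hp hp' hu' hv' f - hhS hp hp' hu' hv' n f‖ ≤
      ε₂ * (eLpNorm v (ENNReal.ofReal q) (volume.restrict (Set.Icc a b))).toReal * ‖f‖ := by
  set M : ℝ := ε₂ * ‖f‖ with hM
  have hM0 : 0 ≤ M := mul_nonneg hε₂ (norm_nonneg _)
  -- a.e. description of (hhS hp hp' hu' hv' n f)
  set w : ℕ → ℝ → ℝ := fun i => (Set.Ioc a (hhGrid a b n i)).indicator u with hw
  set pr : ℕ → ℝ := fun i => ∫ y, w i y * (⇑f) y ∂(volume.restrict (Set.Icc a b)) with hpr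
  have hSf_ae : ((hhS hp hp' hu' hv' n f) : ℝ → ℝ) =ᵐ[(volume.restrict (Set.Icc a b))] fun x =>
      ∑ i ∈ Finset.range n, pr i • ((hhIdx a b n ⁻¹' {i}).indicator v x) := by
    have hS : (hhS hp hp' hu' hv' n f) = ∑ i ∈ Finset.range n,
        (pr i) • ((hv'.indicator ((hhIdx_measurable a b n) (measurableSet_singleton i))).toLp
          ((hhIdx a b n ⁻¹' {i}).indicator v)) := by
      rw [hhS, ContinuousLinearMap.sum_apply]
      refine Finset.sum_congr rfl fun i _ => ?_
      rw [ContinuousLinearMap.smulRight_apply, hhPairing_apply]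
    rw [hS]
    have h1 := hh_coeFn_sum (μ := volume.restrict (Set.Icc a b)) (Finset.range n) (fun i =>
      (pr i) • ((hv'.indicator ((hhIdx_measurable a b n) (measurableSet_singleton i))).toLp
        ((hhIdx a b n ⁻¹' {i}).indicator v)))
    have h2 : ∀ᵐ x ∂(volume.restrict (Set.Icc a b)), ∀ i ∈ Finset.range n,
        ((((pr i) • ((hv'.indicator ((hhIdx_measurable a b n)
            (measurableSet_singleton i))).toLp ((hhIdx a b n ⁻¹' {i}).indicator v))) :
          Lp ℝ (ENNReal.ofReal q) (volume.restrict (Set.Icc a b))) : ℝ → ℝ) x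
          = pr i • ((hhIdx a b n ⁻¹' {i}).indicator v x) := by
      rw [Filter.eventually_all_finset]
      intro i _
      filter_upwards [Lp.coeFn_smul (pr i)
        ((hv'.indicator ((hhIdx_measurable a b n) (measurableSet_singleton i))).toLp
          ((hhIdx a b n ⁻¹' {i}).indicator v)),
        (hv'.indicator ((hhIdx_measurable a b n)
          (measurableSet_singleton i))).coeFn_toLp] with x hx1 hx2
      rw [hx1, Pi.smul_apply, hx2]
    filter_upwards [h1, h2] with x hx1 hx2
    rw [hx1]
    exact Finset.sum_congr rfl fun i hi => hx2 i hi
  -- pointwise bound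
  have hae : ∀ᵐ x ∂(volume.restrict (Set.Icc a b)), ‖(((hardyCLM hp hp' hu' hv' f) - (hhS hp hp' hu' hv' n f) : Lp ℝ (ENNReal.ofReal q) (volume.restrict (Set.Icc a b))) : ℝ → ℝ) x‖ ≤ ‖(M • v) x‖ := by
    filter_upwards [Lp.coeFn_sub (hardyCLM hp hp' hu' hv' f) (hhS hp hp' hu' hv' n f), hardyCLM_coeFn hp hp' hu' hv' f, hSf_ae,
      ae_restrict_mem measurableSet_Icc] with x hx1 hx2 hx3 hxmem
    rw [hx1, Pi.sub_apply, hx2, hx3]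
    set i₀ := hhIdx a b n x with hi₀
    have hi₀n : i₀ < n := hhIdx_lt hn x
    set c₀ := hhGrid a b n i₀ with hc₀
    obtain ⟨hac₀, hc₀x, hxc₀⟩ := hhGrid_mem hab hn hxmem
    have hc₀mem : c₀ ∈ Set.Icc a b := ⟨hac₀, hc₀x.trans hxmem.2⟩
    -- collapse the sum
    have hsum : ∑ i ∈ Finset.range n, pr i • ((hhIdx a b n ⁻¹' {i}).indicator v x)
        = pr i₀ * v x := by
      rw [Finset.sum_eq_single_of_mem i₀ (Finset.mem_range.mpr hi₀n)]
      · rw [indicator_of_mem (mem_preimage.mpr (mem_singleton_iff.mpr hi₀.symm)), smul_eq_mul]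
      · intro j _ hj
        rw [indicator_of_notMem
          (fun h => hj ((hi₀.trans (mem_singleton_iff.mp (mem_preimage.mp h))).symm)), smul_zero]
    have hpr_eq : pr i₀ = ∫ t in a..c₀, hhG a b u (⇑f) t := hh_pair_eq hp hp' hu' hc₀mem (⇑f)
    have hI1 : IntervalIntegrable (hhG a b u (⇑f)) volume a x :=
      (hhG_integrable hp hp' hu' (Lp.memLp f)).intervalIntegrable
    have hI2 : IntervalIntegrable (hhG a b u (⇑f)) volume a c₀ :=
      (hhG_integrable hp hp' hu' (Lp.memLp f)).intervalIntegrable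
    have hkey := intervalIntegral.integral_interval_sub_left hI1 hI2
    have hdiff : hhT a b u v (⇑f) x -
        (∑ i ∈ Finset.range n, pr i • ((hhIdx a b n ⁻¹' {i}).indicator v x))
        = v x * ∫ t in c₀..x, hhG a b u (⇑f) t := by
      rw [hsum, hhT, hpr_eq, ← hkey]
      ring
    rw [hdiff]
    -- bound the remainder integral
    have hsub2 : Set.Ioc c₀ x ⊆ Set.Icc a b := fun t ht => ⟨hac₀.trans ht.1.le, ht.2.trans hxmem.2⟩
    have hIbound : ‖∫ t in c₀..x, hhG a b u (⇑f) t‖ ≤ M := by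
      have h1 : ‖∫ t in c₀..x, hhG a b u (⇑f) t‖ ≤ ∫ t in c₀..x, ‖hhG a b u (⇑f) t‖ :=
        intervalIntegral.norm_integral_le_integral_norm hc₀x
      have h2 : ∫ t in c₀..x, ‖hhG a b u (⇑f) t‖ =
          ∫ y, ‖(Set.Ioc c₀ x).indicator u y * (⇑f) y‖ ∂(volume.restrict (Set.Icc a b)) := by
        rw [intervalIntegral.integral_of_le hc₀x]
        have h3a : ∀ y, ‖(Set.Ioc c₀ x).indicator u y * (⇑f) y‖
            = (Set.Ioc c₀ x).indicator (fun y => ‖u y * (⇑f) y‖) y := by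
          intro y; by_cases hy : y ∈ Set.Ioc c₀ x
          · rw [indicator_of_mem hy, indicator_of_mem hy]
          · rw [indicator_of_notMem hy, indicator_of_notMem hy, zero_mul, norm_zero]
        have h3 : ∫ y, ‖(Set.Ioc c₀ x).indicator u y * (⇑f) y‖ ∂(volume.restrict (Set.Icc a b)) =
            ∫ y in Set.Ioc c₀ x, ‖u y * (⇑f) y‖ ∂(volume.restrict (Set.Icc a b)) := by
          rw [integral_congr_ae (Eventually.of_forall h3a)]
          exact integral_indicator measurableSet_Ioc
        rw [h3, Measure.restrict_restrict measurableSet_Ioc, inter_eq_left.mpr hsub2]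
        refine setIntegral_congr_ae measurableSet_Ioc (Eventually.of_forall fun t ht => ?_)
        rw [hhG, indicator_of_mem (hsub2 ht), norm_mul, norm_mul, mul_comm]
      have h4 : ∫ y, ‖(Set.Ioc c₀ x).indicator u y * (⇑f) y‖ ∂(volume.restrict (Set.Icc a b)) ≤
          (eLpNorm ((Set.Ioc c₀ x).indicator u) (ENNReal.ofReal p') (volume.restrict (Set.Icc a b))).toReal *
            (eLpNorm (⇑f) (ENNReal.ofReal p) (volume.restrict (Set.Icc a b))).toReal :=
        hh_norm_integral_le (hh_h11 hp hp') (hu'.indicator measurableSet_Ioc) (Lp.memLp f)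
      have h5 : (eLpNorm ((Set.Ioc c₀ x).indicator u) (ENNReal.ofReal p') (volume.restrict (Set.Icc a b))).toReal ≤ ε₂ :=
        hE c₀ x hac₀ hc₀x hxmem.2 hxc₀
      have h6 : (eLpNorm (⇑f) (ENNReal.ofReal p) (volume.restrict (Set.Icc a b))).toReal = ‖f‖ := (Lp.norm_def f).symm
      calc ‖∫ t in c₀..x, hhG a b u (⇑f) t‖
          ≤ ∫ y, ‖(Set.Ioc c₀ x).indicator u y * (⇑f) y‖ ∂(volume.restrict (Set.Icc a b)) := h2 ▸ h1
        _ ≤ (eLpNorm ((Set.Ioc c₀ x).indicator u) (ENNReal.ofReal p') (volume.restrict (Set.Icc a b))).toReal *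
              (eLpNorm (⇑f) (ENNReal.ofReal p) (volume.restrict (Set.Icc a b))).toReal := h4
        _ ≤ ε₂ * ‖f‖ := by
            rw [h6]
            exact mul_le_mul_of_nonneg_right h5 (by rw [← h6]; exact ENNReal.toReal_nonneg)
        _ = M := hM.symm
    rw [Pi.smul_apply, smul_eq_mul, norm_mul, norm_mul, Real.norm_of_nonneg hM0, mul_comm M]
    exact mul_le_mul_of_nonneg_left hIbound (norm_nonneg _)
  -- conclude via eLpNorm monotonicity
  rw [Lp.norm_def]
  have h1 : eLpNorm (((hardyCLM hp hp' hu' hv' f) - (hhS hp hp' hu' hv' n f) : Lp ℝ (ENNReal.ofReal q) (volume.restrict (Set.Icc a b))) : ℝ → ℝ) (ENNReal.ofReal q) (volume.restrict (Set.Icc a b)) ≤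
      ‖M‖₊ * eLpNorm v (ENNReal.ofReal q) (volume.restrict (Set.Icc a b)) :=
    (eLpNorm_mono_ae hae).trans_eq (eLpNorm_const_smul _ _ _ _)
  have h2 := ENNReal.toReal_mono
    (ENNReal.mul_ne_top ENNReal.coe_ne_top hv'.eLpNorm_ne_top) h1
  rw [ENNReal.toReal_mul, ENNReal.coe_toReal, coe_nnnorm, Real.norm_of_nonneg hM0] at h2
  calc (eLpNorm (((hardyCLM hp hp' hu' hv' f) - (hhS hp hp' hu' hv' n f) : Lp ℝ (ENNReal.ofReal q) (volume.restrict (Set.Icc a b))) : ℝ → ℝ) (ENNReal.ofReal q) (volume.restrict (Set.Icc a b))).toReal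
      ≤ M * (eLpNorm v (ENNReal.ofReal q) (volume.restrict (Set.Icc a b))).toReal := h2
    _ = ε₂ * (eLpNorm v (ENNReal.ofReal q) (volume.restrict (Set.Icc a b))).toReal * ‖f‖ := by rw [hM]; ring

end Approx3

theorem hardy_operator_compact
    (a b p q p' : ℝ) (u v : ℝ → ℝ)
    [Fact (1 ≤ ENNReal.ofReal p)] [Fact (1 ≤ ENNReal.ofReal q)]
    (hab : a < b) (hp : 1 < p) (hq : 1 < q)
    (hp' : 1 / p' = 1 - 1 / p)
    (hu : ∀ x ∈ Set.Icc a b, 0 < u x) (hv : ∀ x ∈ Set.Icc a b, 0 < v x)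
    (hu' : MemLp u (ENNReal.ofReal p') (volume.restrict (Set.Icc a b)))
    (hv' : MemLp v (ENNReal.ofReal q) (volume.restrict (Set.Icc a b))) :
    ∃ T : Lp ℝ (ENNReal.ofReal p) (volume.restrict (Set.Icc a b)) →L[ℝ]
        Lp ℝ (ENNReal.ofReal q) (volume.restrict (Set.Icc a b)),
      IsCompactOperator T ∧
      ∀ f : Lp ℝ (ENNReal.ofReal p) (volume.restrict (Set.Icc a b)),
        ∀ᵐ x ∂(volume.restrict (Set.Icc a b)),
          (T f : ℝ → ℝ) x = v x * ∫ t in a..x, (f : ℝ → ℝ) t * u t := by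
  refine ⟨hardyCLM hp hp' hu' hv', ?_, ?_⟩
  · -- compactness: operator-norm limit of the finite rank operators `hhS`
    refine isCompactOperator_of_tendsto (l := Filter.atTop)
      (F := fun n : ℕ => hhS hp hp' hu' hv' n) ?_
      (Filter.Eventually.of_forall fun n => hhS_isCompact hp hp' hu' hv' n)
    rw [Metric.tendsto_atTop]
    intro ε hε
    set Vq := (eLpNorm v (ENNReal.ofReal q) (volume.restrict (Set.Icc a b))).toReal with hVq
    have hVq0 : 0 ≤ Vq := ENNReal.toReal_nonneg
    have hε₃ : 0 < ε / (2 * (Vq + 1)) := by positivity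
    obtain ⟨δ, hδ0, hδ⟩ := hh_smallnorm hab hp hp' hu' _ hε₃
    refine ⟨max 1 (⌈(b - a) / δ⌉₊ + 1), fun n hn => ?_⟩
    have hn1 : 1 ≤ n := le_trans (le_max_left _ _) hn
    have hnR : (0:ℝ) < n := by exact_mod_cast hn1
    have hceil : ((b - a) / δ : ℝ) < n := by
      have h1 : (⌈(b - a) / δ⌉₊ + 1 : ℕ) ≤ n := le_trans (le_max_right _ _) hn
      have h2 := Nat.le_ceil ((b - a) / δ)
      have h3 : ((⌈(b - a) / δ⌉₊ + 1 : ℕ) : ℝ) ≤ n := by exact_mod_cast h1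
      push_cast at h3
      linarith
    have hlt : (b - a) / n < δ := by
      rw [div_lt_iff₀ hnR]
      rw [div_lt_iff₀ hδ0] at hceil
      linarith
    have hE : ∀ c x : ℝ, a ≤ c → c ≤ x → x ≤ b → x - c ≤ (b - a) / n →
        (eLpNorm ((Set.Ioc c x).indicator u) (ENNReal.ofReal p')
          (volume.restrict (Set.Icc a b))).toReal ≤ ε / (2 * (Vq + 1)) :=
      fun c x h1 h2 h3 h4 => hδ c x h1 h2 h3 (lt_of_le_of_lt h4 hlt)
    have hb := hh_opnorm_bound hab hp hp' hu' hv' hn1 hε₃.le hE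
    have hnorm : ‖hardyCLM hp hp' hu' hv' - hhS hp hp' hu' hv' n‖ ≤ ε / (2 * (Vq + 1)) * Vq := by
      refine ContinuousLinearMap.opNorm_le_bound _ (by positivity) fun f => ?_
      rw [ContinuousLinearMap.sub_apply]
      exact hb f
    rw [dist_eq_norm, ← norm_neg, neg_sub]
    have h5 : ε / (2 * (Vq + 1)) * (Vq + 1) = ε / 2 := by
      field_simp
    have h6 : ε / (2 * (Vq + 1)) * Vq ≤ ε / 2 := by
      calc ε / (2 * (Vq + 1)) * Vq ≤ ε / (2 * (Vq + 1)) * (Vq + 1) :=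
            mul_le_mul_of_nonneg_left (by linarith) hε₃.le
        _ = ε / 2 := h5
    calc ‖hardyCLM hp hp' hu' hv' - hhS hp hp' hu' hv' n‖ ≤ ε / (2 * (Vq + 1)) * Vq := hnorm
      _ ≤ ε / 2 := h6
      _ < ε := by linarith
  · intro f
    filter_upwards [hardyCLM_coeFn hp hp' hu' hv' f, ae_restrict_mem measurableSet_Icc]
      with x h1 h2
    rw [h1, hhT_eq_on_Icc h2]
end

section
/- If f∈L_p(I) and λ∈ℝ satisfy the nonlinear equation f_{(p)} = λ T*((Tf)_{(q)}), then s := (Tf)_{(q)} and λ* := λ_{(p')} satisfy the dual equation s_{(q')} = λ* T((T*s)_{(p')}). -/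
open MeasureTheory Set

lemma sgn_mul' (a b : ℝ) : Real.sign (a*b) = Real.sign a * Real.sign b := by
  rcases lt_trichotomy a 0 with ha|ha|ha <;> rcases lt_trichotomy b 0 with hb|hb|hb <;>
    simp [ha, hb, Real.sign_of_pos, Real.sign_of_neg, mul_pos, mul_pos_of_neg_of_neg,
      mul_neg_of_pos_of_neg, mul_neg_of_neg_of_pos]

lemma abs_mul_sgn (a : ℝ) : |a| * Real.sign a = a := by
  rcases lt_trichotomy a 0 with ha|ha|ha <;>
    simp [ha, Real.sign_of_pos, Real.sign_of_neg, abs_of_pos, abs_of_neg, ha.le]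

lemma powSgn_mul (r a b : ℝ) : powSgn r (a*b) = powSgn r a * powSgn r b := by
  unfold powSgn
  rw [abs_mul, Real.mul_rpow (abs_nonneg a) (abs_nonneg b), sgn_mul']
  ring

lemma conj_exps {p p' : ℝ} (hp : 1 < p) (hp' : 1 / p' = 1 - 1 / p) :
    (p - 1) * (p' - 1) = 1 ∧ 1 < p' := by
  have hp0 : (0:ℝ) < p := by linarith
  have hinv : 0 < 1/p := by positivity
  have hlt : 1/p < 1 := by rw [div_lt_one hp0]; linarith
  have h1 : (0:ℝ) < 1 - 1/p := by linarith
  have hp'pos : 0 < p' := by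
    by_contra h
    push_neg at h
    have : 1/p' ≤ 0 := one_div_nonpos.2 h
    linarith
  constructor
  · have hp'0 : p' ≠ 0 := ne_of_gt hp'pos
    field_simp at hp'
    nlinarith
  · have h2 : 1/p' < 1 := by rw [hp']; linarith
    rwa [div_lt_one hp'pos] at h2

lemma powSgn_powSgn {p p' : ℝ} (hp : 1 < p) (hp' : 1 / p' = 1 - 1 / p) (t : ℝ) :
    powSgn p' (powSgn p t) = t := by
  obtain ⟨hconj, hp'1⟩ := conj_exps hp hp'
  rcases eq_or_ne t 0 with rfl|ht
  · simp [powSgn]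
  · have habs : (0:ℝ) < |t| ^ (p-1) := Real.rpow_pos_of_pos (abs_pos.2 ht) _
    have hs : |Real.sign t| = 1 := by
      rcases Real.sign_apply_eq_of_ne_zero t ht with h|h <;> rw [h] <;>
        simp [Real.sign_of_neg, Real.sign_one]
    have hss : Real.sign (Real.sign t) = Real.sign t := by
      rcases Real.sign_apply_eq_of_ne_zero t ht with h|h <;> rw [h] <;>
        simp [Real.sign_of_neg, Real.sign_one]
    unfold powSgn
    rw [abs_mul, hs, mul_one, sgn_mul', Real.sign_of_pos habs, one_mul, hss,
      abs_of_pos habs, ← Real.rpow_mul (abs_nonneg t), hconj, Real.rpow_one, abs_mul_sgn]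

theorem dual_of_primal_equation
    (a b p q p' : ℝ) (u v : ℝ → ℝ)
    (hab : a < b) (hp : 1 < p) (hq : 1 < q)
    (hp' : 1 / p' = 1 - 1 / p)
    (hu : ∀ x ∈ Set.Icc a b, 0 < u x) (hv : ∀ x ∈ Set.Icc a b, 0 < v x)
    (hu' : MemLp u (ENNReal.ofReal p') (volume.restrict (Set.Icc a b)))
    (hv' : MemLp v (ENNReal.ofReal q) (volume.restrict (Set.Icc a b)))
    (q' : ℝ) (hq' : 1 / q' = 1 - 1 / q)
    (f : ℝ → ℝ) (lam : ℝ)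
    (hf : MemLp f (ENNReal.ofReal p) (volume.restrict (Set.Icc a b)))
    (heq : ∀ x ∈ Set.Icc a b,
      powSgn p (f x) =
        lam * hardyTstar u v b (fun y => powSgn q (hardyT u v a f y)) x) :
    ∀ x ∈ Set.Icc a b,
      powSgn q' (powSgn q (hardyT u v a f x)) =
        powSgn p' lam *
          hardyT u v a
            (fun y => powSgn p'
              (hardyTstar u v b (fun z => powSgn q (hardyT u v a f z)) y)) x := by
  intro x hx
  rw [powSgn_powSgn hq hq']
  have hax : a ≤ x := hx.1
  simp only [hardyT]
  rw [mul_left_comm]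
  congr 1
  rw [← intervalIntegral.integral_const_mul]
  apply intervalIntegral.integral_congr
  intro y hy
  have hyI : y ∈ Set.Icc a b := by
    rw [Set.uIcc_of_le hax] at hy
    exact ⟨hy.1, hy.2.trans hx.2⟩
  have h := heq y hyI
  simp only [hardyT] at h
  show f y * u y = powSgn p' lam * (powSgn p' _ * u y)
  rw [← mul_assoc, ← powSgn_mul, ← h, powSgn_powSgn hp hp']
end
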